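/- arXiv:1202.3963 — 2 statements merged into one kernel-verified Lean document; each statement's English description precedes it below -/
import Mathlib

section
/- Let n ≥ 2 and let α ∈ ℂ with |α| < 1; write a = |α|, and let t₁^{(n)} and t_n^{(n)} be respectively the smallest and the largest zero in (0, π) of q_{n,a}(t) = sin((n+1)t) − 2a·sin(nt) + a²·sin((n−1)t). Set m_n(a) = max{ |(1+a²)cos t₁^{(n)} − 2a| / (1 − 2a·cos t₁^{(n)} + a²) , (−(1+a²)cos t_n^{(n)} + 2a) / (1 − 2a·cos t_n^{(n)} + a²) } and M_n(a) = max{ ((1−3a²)cos t₁^{(n)} + 2a³) / (1 − 2a·cos t₁^{(n)} + a²) , (−(1+a²)cos t_n^{(n)} + 2a) / (1 − 2a·cos t_n^{(n)} + a²) }. Then m_n(a) ≤ w(T_n(α)) ≤ M_n(a). -/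
/-- The numerical radius of an `n × n` complex matrix `A`:
`w(A) = sup { |⟨Ax, x⟩| : ‖x‖ = 1 }` (standard Hermitian inner product on `ℂⁿ`). -/
noncomputable def numRadius {n : ℕ} (A : Matrix (Fin n) (Fin n) ℂ) : ℝ :=
  sSup { r : ℝ | ∃ x : EuclideanSpace ℂ (Fin n), ‖x‖ = 1 ∧
    r = ‖(inner ℂ x (Matrix.toEuclideanLin A x) : ℂ)‖ }

/-- The matrix `T_n(α)` of the compressed adjoint shift `S*(φ)` for
`φ(z) = ((z−α)/(1−ᾱz))ⁿ`: its `(l,k)` entry is `ᾱ` if `l = k`,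
`(1 − |α|²)(−α)^{k−l−1}` if `k > l`, and `0` otherwise. -/
noncomputable def Tmat (n : ℕ) (α : ℂ) : Matrix (Fin n) (Fin n) ℂ :=
  Matrix.of fun l k : Fin n =>
    if l = k then (starRingEnd ℂ) α
    else if l < k then ((1 - ‖α‖ ^ 2 : ℝ) : ℂ) * (-α) ^ ((k : ℕ) - (l : ℕ) - 1)
    else 0


namespace NRaux


/-- eigenvector components -/
noncomputable def vv (a t : ℝ) (k : ℕ) : ℝ :=
  Real.sin (((k:ℝ)+1)*t) - a * Real.sin ((k:ℝ)*t)

/-- the `q`-type expression -/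
noncomputable def PP (a t : ℝ) (l : ℕ) : ℝ :=
  Real.sin (((l:ℝ)+1)*t) - 2*a*Real.sin ((l:ℝ)*t) + a^2 * Real.sin (((l:ℝ)-1)*t)

noncomputable def dd (a t : ℝ) : ℝ := 1 - 2*a*Real.cos t + a^2

noncomputable def gg (a t : ℝ) : ℝ := ((1-3*a^2)*Real.cos t + 2*a^3)/(dd a t)

noncomputable def FF (a : ℝ) (l k : ℕ) : ℝ :=
  if l = k then a else (1-a^2)/2 * a^(Nat.dist l k - 1)

lemma nat_dist_eq (l k : ℕ) : Nat.dist l k = (l-k)+(k-l) := rfl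

lemma dd_pos {a : ℝ} (ha0 : 0 ≤ a) (ha1 : a < 1) (t : ℝ) : 0 < dd a t := by
  have h1 := Real.cos_le_one t
  have : (1-a)^2 ≤ dd a t := by unfold dd; nlinarith
  nlinarith

lemma dv (a t : ℝ) (l : ℕ) :
    dd a t * vv a t l = PP a t l - a * PP a t (l+1) := by
  unfold dd vv PP
  push_cast
  have e1 : ((l:ℝ)+1)*t = (l:ℝ)*t + t := by ring
  have e2 : ((l:ℝ)+1+1)*t = ((l:ℝ)*t + t) + t := by ring
  have e3 : ((l:ℝ)-1)*t = (l:ℝ)*t - t := by ring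
  have e4 : ((l:ℝ)+1-1)*t = (l:ℝ)*t := by ring
  rw [e1, e2, e3, e4]
  simp only [Real.sin_add, Real.cos_add, Real.sin_sub, Real.cos_sub]
  linear_combination (-(a) * Real.sin ((l:ℝ)*t)) * (Real.sin_sq_add_cos_sq t)

lemma hsum (a t : ℝ) (l : ℕ) : ∀ m : ℕ,
    dd a t * (∑ j ∈ Finset.range m, a^j * vv a t (l+j))
      = PP a t l - a^m * PP a t (l+m) := by
  intro m
  induction m with
  | zero => simp
  | succ m ih =>
    rw [Finset.sum_range_succ, mul_add, ih]
    have := dv a t (l+m)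
    have e : l + (m+1) = (l+m)+1 := by ring
    rw [e]
    linear_combination a^m * (dv a t (l+m))

lemma lsum (a t : ℝ) : ∀ l : ℕ,
    (∑ k ∈ Finset.range l, a^(l-1-k) * vv a t k) = Real.sin ((l:ℝ)*t) := by
  intro l
  induction l with
  | zero => simp
  | succ l ih =>
    rw [Finset.sum_range_succ]
    have e0 : l + 1 - 1 - l = 0 := by omega
    have hc : ∀ k ∈ Finset.range l, a^(l+1-1-k) * vv a t k = a * (a^(l-1-k) * vv a t k) := by
      intro k hk
      rw [Finset.mem_range] at hk
      have : l + 1 - 1 - k = (l-1-k) + 1 := by omega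
      rw [this, pow_succ]
      ring
    rw [Finset.sum_congr rfl hc, ← Finset.mul_sum, ih, e0]
    unfold vv
    push_cast
    ring

/-- key row identity -/
lemma keyrow (a t : ℝ) (l : ℕ) :
    dd a t * Real.sin ((l:ℝ)*t) + PP a t (l+1)
      = 2*(Real.cos t - a) * vv a t l := by
  unfold dd vv PP
  push_cast
  have e1 : ((l:ℝ)+1)*t = (l:ℝ)*t + t := by ring
  have e2 : ((l:ℝ)+1+1)*t = ((l:ℝ)*t + t) + t := by ring
  have e4 : ((l:ℝ)+1-1)*t = (l:ℝ)*t := by ring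
  rw [e1, e2, e4]
  simp only [Real.sin_add, Real.cos_add]
  linear_combination (-Real.sin ((l:ℝ)*t)) * (Real.sin_sq_add_cos_sq t)

lemma eig {n : ℕ} {a t : ℝ} (ha0 : 0 ≤ a) (ha1 : a < 1)
    (hP : PP a t n = 0) (l : Fin n) :
    ∑ k : Fin n, FF a (l:ℕ) (k:ℕ) * vv a t (k:ℕ) = gg a t * vv a t (l:ℕ) := by
  have hd := dd_pos ha0 ha1 t
  have hl : (l:ℕ) < n := l.isLt
  rw [Fin.sum_univ_eq_sum_range (fun k => FF a (l:ℕ) k * vv a t k) n]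
  rw [← Finset.sum_range_add_sum_Ico (fun k => FF a (l:ℕ) k * vv a t k)
    (show (l:ℕ)+1 ≤ n by omega), Finset.sum_range_succ]
  have h1 : ∑ k ∈ Finset.range (l:ℕ), FF a (l:ℕ) k * vv a t k
      = (1-a^2)/2 * Real.sin (((l:ℕ):ℝ)*t) := by
    rw [← lsum a t (l:ℕ), Finset.mul_sum]
    apply Finset.sum_congr rfl
    intro k hk
    rw [Finset.mem_range] at hk
    have hne : (l:ℕ) ≠ k := by omega
    have hdist : Nat.dist (l:ℕ) k - 1 = (l:ℕ)-1-k := by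
      rw [nat_dist_eq]; omega
    unfold FF
    rw [if_neg hne, hdist]
    ring
  have h2 : ∑ k ∈ Finset.Ico ((l:ℕ)+1) n, FF a (l:ℕ) k * vv a t k
      = (1-a^2)/2 * (PP a t ((l:ℕ)+1) / dd a t) := by
    rw [Finset.sum_Ico_eq_sum_range]
    have hc : ∀ j ∈ Finset.range (n - ((l:ℕ)+1)),
        FF a (l:ℕ) ((l:ℕ)+1+j) * vv a t ((l:ℕ)+1+j)
          = (1-a^2)/2 * (a^j * vv a t ((l:ℕ)+1+j)) := by
      intro j hj
      have hne : (l:ℕ) ≠ (l:ℕ)+1+j := by omega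
      have hdist : Nat.dist (l:ℕ) ((l:ℕ)+1+j) - 1 = j := by
        rw [nat_dist_eq]; omega
      unfold FF
      rw [if_neg hne, hdist]
      ring
    rw [Finset.sum_congr rfl hc, ← Finset.mul_sum]
    have hh := hsum a t ((l:ℕ)+1) (n - ((l:ℕ)+1))
    have he : (l:ℕ)+1 + (n - ((l:ℕ)+1)) = n := by omega
    rw [he, hP, mul_zero, sub_zero] at hh
    rw [show (∑ j ∈ Finset.range (n - ((l:ℕ)+1)), a^j * vv a t ((l:ℕ)+1+j))
      = PP a t ((l:ℕ)+1) / dd a t from by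
        field_simp
        linarith [hh]]
  rw [h1, h2, show FF a (l:ℕ) (l:ℕ) = a from if_pos rfl]
  have hk := keyrow a t (l:ℕ)
  have hd' : dd a t ≠ 0 := ne_of_gt hd
  apply mul_left_cancel₀ hd'
  have e1 : dd a t * ((1 - a ^ 2) / 2 * (PP a t ((l:ℕ) + 1) / dd a t))
      = (1-a^2)/2 * PP a t ((l:ℕ)+1) := by field_simp
  have e2 : dd a t * (gg a t * vv a t (l:ℕ))
      = ((1-3*a^2)*Real.cos t + 2*a^3) * vv a t (l:ℕ) := by
    unfold gg; field_simp
  rw [mul_add, mul_add, e1, e2]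
  unfold dd at hk ⊢
  linear_combination ((1-a^2)/2) * hk
noncomputable def Phi (a : ℝ) (n : ℕ) (t : ℝ) : ℝ :=
  ((n:ℝ)-1)*t + 2*Real.arccos ((Real.cos t - a)/Real.sqrt (dd a t))

lemma qid {a : ℝ} (ha0 : 0 ≤ a) (ha1 : a < 1) (n : ℕ) {t : ℝ}
    (ht : t ∈ Set.Icc 0 Real.pi) :
    PP a t n = dd a t * Real.sin (Phi a n t) := by
  have hd := dd_pos ha0 ha1 t
  have hs0 : 0 ≤ Real.sin t := Real.sin_nonneg_of_nonneg_of_le_pi ht.1 ht.2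
  set c := Real.cos t with hc
  set s := Real.sin t with hsdef
  set D := dd a t with hD
  set r := Real.sqrt D with hr
  have hr0 : 0 < r := Real.sqrt_pos.mpr hd
  have hr2 : r^2 = D := Real.sq_sqrt hd.le
  have hpyth : s^2 + c^2 = 1 := Real.sin_sq_add_cos_sq t
  have hDc : D - (c - a)^2 = s^2 := by
    rw [hD]; unfold dd; rw [← hc]; nlinarith
  set u := (c - a)/r with hu
  have hu2 : u^2 ≤ 1 := by
    rw [hu, div_pow, hr2]
    rw [div_le_one hd]
    nlinarith
  have hum : -1 ≤ u := by nlinarith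
  have huM : u ≤ 1 := by nlinarith
  have hcos : Real.cos (Real.arccos u) = u := Real.cos_arccos hum huM
  have hsin : Real.sin (Real.arccos u) = s/r := by
    rw [Real.sin_arccos]
    have h1 : 1 - u^2 = s^2/D := by
      rw [hu, div_pow, hr2]
      field_simp
      linarith
    rw [h1, Real.sqrt_div (sq_nonneg s), Real.sqrt_sq hs0, hr]
  have hsinPhi : Real.sin (Phi a n t)
      = Real.sin (((n:ℝ)-1)*t) * (2*u^2-1) + Real.cos (((n:ℝ)-1)*t) * (2*(s/r)*u) := by
    unfold Phi
    rw [← hD, ← hr, ← hu, Real.sin_add, Real.sin_two_mul, Real.cos_two_mul, hcos, hsin]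
  rw [hsinPhi]
  have hexp : D * (Real.sin (((n:ℝ)-1)*t) * (2*u^2-1) + Real.cos (((n:ℝ)-1)*t) * (2*(s/r)*u))
      = Real.sin (((n:ℝ)-1)*t) * (2*(c-a)^2 - D) + Real.cos (((n:ℝ)-1)*t) * (2*s*(c-a)) := by
    rw [hu, div_pow, ← hr2]
    field_simp
  rw [hexp]
  unfold PP
  have e1 : ((n:ℝ)+1)*t = ((n:ℝ)-1)*t + (t+t) := by ring
  have e2 : (n:ℝ)*t = ((n:ℝ)-1)*t + t := by ring
  rw [e1, e2]
  simp only [Real.sin_add, Real.cos_add]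
  rw [← hc, ← hsdef, hD]; unfold dd; rw [← hc]
  linear_combination (-Real.sin (((n:ℝ)-1)*t)) * hpyth

lemma zeros {a : ℝ} (ha0 : 0 ≤ a) (ha1 : a < 1) {n : ℕ} (hn : 1 ≤ n) :
    ∃ z : Fin n → ℝ, (∀ j, z j ∈ Set.Ioo 0 Real.pi ∧ PP a (z j) n = 0) ∧
      ∀ j k : Fin n, j ≠ k → Real.cos (z j) ≠ Real.cos (z k) := by
  have h1a : (0:ℝ) < 1 - a := by linarith
  have hcont : Continuous (Phi a n) := by
    unfold Phi
    apply Continuous.add (by fun_prop)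
    apply Continuous.mul continuous_const
    apply Real.continuous_arccos.comp
    apply Continuous.div (by fun_prop)
    · apply Real.continuous_sqrt.comp; unfold dd; fun_prop
    · intro t
      exact ne_of_gt (Real.sqrt_pos.mpr (dd_pos ha0 ha1 t))
  have hPhi0 : Phi a n 0 = 0 := by
    unfold Phi dd
    rw [Real.cos_zero]
    have : (1 - 2*a*1 + a^2) = (1-a)^2 := by ring
    rw [this, Real.sqrt_sq h1a.le, div_self (ne_of_gt h1a), Real.arccos_one]
    ring
  have hPhipi : Phi a n Real.pi = ((n:ℝ)+1)*Real.pi := by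
    unfold Phi dd
    rw [Real.cos_pi]
    have : (1 - 2*a*(-1) + a^2) = (1+a)^2 := by ring
    rw [this, Real.sqrt_sq (by linarith), show (-1 - a) = -(1+a) by ring,
      neg_div, div_self (by positivity : (1:ℝ)+a ≠ 0), Real.arccos_neg_one]
    ring
  have H : ∀ j : Fin n, ∃ x ∈ Set.Ioo 0 Real.pi, Phi a n x = ((j:ℕ)+1 : ℝ)*Real.pi := by
    intro j
    have hmem : ((j:ℕ)+1 : ℝ)*Real.pi ∈ Set.Ioo (Phi a n 0) (Phi a n Real.pi) := by
      rw [hPhi0, hPhipi]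
      constructor
      · positivity
      · apply mul_lt_mul_of_pos_right _ Real.pi_pos
        have : (j:ℕ) < n := j.isLt
        push_cast
        linarith [show ((j:ℕ):ℝ) < (n:ℝ) by exact_mod_cast this]
    have := intermediate_value_Ioo Real.pi_pos.le hcont.continuousOn hmem
    obtain ⟨x, hx, hfx⟩ := this
    exact ⟨x, hx, hfx⟩
  choose z hz1 hz2 using H
  refine ⟨z, fun j => ⟨hz1 j, ?_⟩, ?_⟩
  · rw [qid ha0 ha1 n (Set.mem_Icc_of_Ioo (hz1 j)), hz2 j]
    have : (((j:ℕ)+1 : ℝ)) = (((j:ℕ)+1 : ℕ) : ℝ) := by push_cast; ring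
    rw [this, Real.sin_nat_mul_pi, mul_zero]
  · intro j k hjk hcoseq
    have hzeq : z j = z k := by
      have := Real.injOn_cos (Set.mem_Icc_of_Ioo (hz1 j)) (Set.mem_Icc_of_Ioo (hz1 k))
      exact this hcoseq
    have : ((j:ℕ)+1 : ℝ)*Real.pi = ((k:ℕ)+1 : ℝ)*Real.pi := by
      rw [← hz2 j, ← hz2 k, hzeq]
    have hjknat : (j:ℕ) = (k:ℕ) := by
      have := mul_right_cancel₀ (ne_of_gt Real.pi_pos) this
      exact_mod_cast (by linarith : ((j:ℕ):ℝ) = ((k:ℕ):ℝ))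
    exact hjk (Fin.ext hjknat)
lemma FF_symm (a : ℝ) (l k : ℕ) : FF a l k = FF a k l := by
  unfold FF
  rcases eq_or_ne l k with h | h
  · rw [h]
  · rw [if_neg h, if_neg (Ne.symm h), Nat.dist_comm]

lemma sym {n : ℕ} (a : ℝ) (v w : Fin n → ℝ) :
    ∑ l : Fin n, (∑ k : Fin n, FF a (l:ℕ) (k:ℕ) * v k) * w l
      = ∑ l : Fin n, (∑ k : Fin n, FF a (l:ℕ) (k:ℕ) * w k) * v l := by
  simp only [Finset.sum_mul]
  rw [Finset.sum_comm]
  apply Finset.sum_congr rfl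
  intro l _
  apply Finset.sum_congr rfl
  intro k _
  rw [FF_symm]
  ring

lemma gg_le {a : ℝ} (ha0 : 0 ≤ a) (ha1 : a < 1) {s t : ℝ}
    (hcos : Real.cos s ≤ Real.cos t) : gg a s ≤ gg a t := by
  have d1 := dd_pos ha0 ha1 t
  have d2 := dd_pos ha0 ha1 s
  unfold gg
  rw [div_le_div_iff₀ d2 d1]
  unfold dd at d1 d2 ⊢
  nlinarith [mul_nonneg (sq_nonneg ((1:ℝ)-a^2)) (sub_nonneg.mpr hcos)]

lemma gg_ne {a : ℝ} (ha0 : 0 ≤ a) (ha1 : a < 1) {s t : ℝ}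
    (hcos : Real.cos s ≠ Real.cos t) : gg a s ≠ gg a t := by
  intro heq
  apply hcos
  have d1 := dd_pos ha0 ha1 s
  have d2 := dd_pos ha0 ha1 t
  unfold gg at heq
  rw [div_eq_div_iff (ne_of_gt d1) (ne_of_gt d2)] at heq
  have h2 : (0:ℝ) < 1 - a^2 := by nlinarith
  have h3 : (1-a^2)^2 * (Real.cos s - Real.cos t) = 0 := by
    unfold dd at heq
    linear_combination heq
  have h4 : Real.cos s - Real.cos t = 0 := by
    rcases mul_eq_zero.mp h3 with h | h
    · exfalso; nlinarith
    · exact h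
  linarith

lemma spec {n : ℕ} (hn : 1 ≤ n) {a : ℝ} (ha0 : 0 ≤ a) (ha1 : a < 1) {t₁ : ℝ}
    (ht₁ : t₁ ∈ Set.Ioo 0 Real.pi)
    (hleast : ∀ t, t ∈ Set.Ioo 0 Real.pi → PP a t n = 0 → t₁ ≤ t)
    (w : Fin n → ℝ) :
    ∑ l : Fin n, ∑ k : Fin n, FF a (l:ℕ) (k:ℕ) * w l * w k
      ≤ gg a t₁ * ∑ k : Fin n, (w k)^2 := by
  obtain ⟨z, hz, hcosinj⟩ := zeros ha0 ha1 hn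
  have hgle : ∀ j, gg a (z j) ≤ gg a t₁ := by
    intro j
    have h1 := hleast (z j) (hz j).1 (hz j).2
    exact gg_le ha0 ha1
      (Real.cos_le_cos_of_nonneg_of_le_pi ht₁.1.le (hz j).1.2.le h1)
  have hgne : ∀ i j : Fin n, i ≠ j → gg a (z i) ≠ gg a (z j) :=
    fun i j hij => gg_ne ha0 ha1 (hcosinj i j hij)
  let eqv := WithLp.equiv 2 (Fin n → ℝ)
  let u : Fin n → EuclideanSpace ℝ (Fin n) := fun j => eqv.symm (fun k => vv a (z j) (k:ℕ))
  have hu_apply : ∀ j k, u j k = vv a (z j) (k:ℕ) := fun j k => rfl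
  have hinner : ∀ (x y : EuclideanSpace ℝ (Fin n)),
      (inner ℝ x y : ℝ) = ∑ k : Fin n, x k * y k := by
    intro x y
    rw [PiLp.inner_apply]
    apply Finset.sum_congr rfl
    intro k _
    rw [RCLike.inner_apply', starRingEnd_apply, star_trivial]
  have heig : ∀ j (l : Fin n), ∑ k : Fin n, FF a (l:ℕ) (k:ℕ) * u j k
      = gg a (z j) * u j l := by
    intro j l
    simpa [hu_apply] using eig ha0 ha1 (hz j).2 l
  have horthog : ∀ i j : Fin n, i ≠ j → (inner ℝ (u i) (u j) : ℝ) = 0 := by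
    intro i j hij
    have hs := sym a (fun k => u i k) (fun k => u j k)
    simp only [heig] at hs
    rw [hinner]
    by_contra hne
    have : gg a (z i) = gg a (z j) := by
      have h1 : gg a (z i) * ∑ l : Fin n, u i l * u j l
          = gg a (z j) * ∑ l : Fin n, u i l * u j l := by
        calc gg a (z i) * ∑ l : Fin n, u i l * u j l
            = ∑ l : Fin n, gg a (z i) * u i l * u j l := by
              rw [Finset.mul_sum]; apply Finset.sum_congr rfl; intros; ring
          _ = ∑ l : Fin n, gg a (z j) * u j l * u i l := hs
          _ = gg a (z j) * ∑ l : Fin n, u i l * u j l := by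
              rw [Finset.mul_sum]; apply Finset.sum_congr rfl; intros; ring
      exact mul_right_cancel₀ hne h1
    exact hgne i j hij this
  have hupos : ∀ j, (0:ℝ) < inner ℝ (u j) (u j) := by
    intro j
    rw [hinner]
    have hsin : 0 < Real.sin (z j) :=
      Real.sin_pos_of_pos_of_lt_pi (hz j).1.1 (hz j).1.2
    have h0 : 0 < u j ⟨0, by omega⟩ * u j ⟨0, by omega⟩ := by
      rw [hu_apply]
      show 0 < vv a (z j) ((0:ℕ)) * _
      unfold vv
      norm_num
      nlinarith
    have hle : u j ⟨0, by omega⟩ * u j ⟨0, by omega⟩ ≤ ∑ k : Fin n, u j k * u j k := by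
      apply Finset.single_le_sum (f := fun k => u j k * u j k) _ (Finset.mem_univ _)
      intro i _
      exact mul_self_nonneg (u j i)
    linarith
  have hu_ne : ∀ j, u j ≠ 0 := by
    intro j h0
    have := hupos j
    rw [h0] at this
    simp at this
  let e : Fin n → EuclideanSpace ℝ (Fin n) := fun j => (‖u j‖)⁻¹ • u j
  have hnorm_pos : ∀ j, (0:ℝ) < ‖u j‖ := fun j => norm_pos_iff.mpr (hu_ne j)
  have horth : Orthonormal ℝ e := by
    rw [orthonormal_iff_ite]
    intro i j
    by_cases hij : i = j
    · subst hij
      simp only [if_pos rfl]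
      show (inner ℝ ((‖u i‖)⁻¹ • u i) ((‖u i‖)⁻¹ • u i) : ℝ) = 1
      rw [real_inner_smul_left, real_inner_smul_right, real_inner_self_eq_norm_sq, sq]
      field_simp
      exact div_self (ne_of_gt (hnorm_pos i))
    · simp only [if_neg hij]
      show (inner ℝ ((‖u i‖)⁻¹ • u i) ((‖u j‖)⁻¹ • u j) : ℝ) = 0
      rw [real_inner_smul_left, real_inner_smul_right, horthog i j hij]
      ring
  have : Nonempty (Fin n) := ⟨⟨0, by omega⟩⟩
  have hcard : Fintype.card (Fin n) = Module.finrank ℝ (EuclideanSpace ℝ (Fin n)) := by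
    simp
  have hspan := horth.linearIndependent.span_eq_top_of_card_eq_finrank hcard
  let b : OrthonormalBasis (Fin n) ℝ (EuclideanSpace ℝ (Fin n)) :=
    OrthonormalBasis.mk horth hspan.ge
  have hb : ∀ j, b j = e j := fun j =>
    congrFun (OrthonormalBasis.coe_mk horth hspan.ge) j
  have heig_e : ∀ j (l : Fin n), ∑ k : Fin n, FF a (l:ℕ) (k:ℕ) * e j k
      = gg a (z j) * e j l := by
    intro j l
    have hek : ∀ k : Fin n, e j k = (‖u j‖)⁻¹ * u j k := fun k => rfl
    simp only [hek]
    rw [show ∑ k : Fin n, FF a (l:ℕ) (k:ℕ) * ((‖u j‖)⁻¹ * u j k)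
        = (‖u j‖)⁻¹ * ∑ k : Fin n, FF a (l:ℕ) (k:ℕ) * u j k from by
      rw [Finset.mul_sum]; apply Finset.sum_congr rfl; intros; ring]
    rw [heig j l]
    ring
  set W : EuclideanSpace ℝ (Fin n) := eqv.symm w with hW
  have hW_apply : ∀ k, W k = w k := fun k => rfl
  set GW : EuclideanSpace ℝ (Fin n) :=
    eqv.symm (fun l => ∑ k : Fin n, FF a (l:ℕ) (k:ℕ) * w k) with hGW
  have hGW_apply : ∀ l, GW l = ∑ k : Fin n, FF a (l:ℕ) (k:ℕ) * w k := fun l => rfl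
  have hmain : ∑ l : Fin n, ∑ k : Fin n, FF a (l:ℕ) (k:ℕ) * w l * w k
      = (inner ℝ W GW : ℝ) := by
    rw [hinner]
    apply Finset.sum_congr rfl
    intro l _
    rw [hW_apply, hGW_apply, Finset.mul_sum]
    apply Finset.sum_congr rfl
    intros
    ring
  have hbGW : ∀ i, (inner ℝ (b i) GW : ℝ) = gg a (z i) * (inner ℝ (b i) W : ℝ) := by
    intro i
    rw [hb, hinner, hinner]
    calc ∑ l : Fin n, e i l * GW l
        = ∑ l : Fin n, (∑ k : Fin n, FF a (l:ℕ) (k:ℕ) * w k) * e i l := by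
          apply Finset.sum_congr rfl; intro l _; rw [hGW_apply]; ring
      _ = ∑ l : Fin n, (∑ k : Fin n, FF a (l:ℕ) (k:ℕ) * e i k) * w l :=
          sym a w (fun l => e i l)
      _ = ∑ l : Fin n, (gg a (z i) * e i l) * w l := by
          apply Finset.sum_congr rfl; intro l _; rw [heig_e]
      _ = gg a (z i) * ∑ l : Fin n, e i l * W l := by
          rw [Finset.mul_sum]; apply Finset.sum_congr rfl
          intro l _; rw [hW_apply]; ring
  have hexp := b.sum_inner_mul_inner W GW
  have hpars := b.sum_inner_mul_inner W W
  have hWW : (inner ℝ W W : ℝ) = ∑ k : Fin n, (w k)^2 := by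
    rw [hinner]
    apply Finset.sum_congr rfl
    intro k _
    rw [hW_apply, sq]
  have hfin : (inner ℝ W GW : ℝ) ≤ gg a t₁ * (inner ℝ W W : ℝ) := by
    rw [← hexp, ← hpars, Finset.mul_sum]
    apply Finset.sum_le_sum
    intro i _
    rw [hbGW i]
    have hsq : (0:ℝ) ≤ (inner ℝ W (b i) : ℝ) * (inner ℝ (b i) W : ℝ) := by
      rw [real_inner_comm W (b i)]
      exact mul_self_nonneg _
    calc (inner ℝ W (b i) : ℝ) * (gg a (z i) * (inner ℝ (b i) W : ℝ))
        = gg a (z i) * ((inner ℝ W (b i):ℝ) * (inner ℝ (b i) W : ℝ)) := by ring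
      _ ≤ gg a t₁ * ((inner ℝ W (b i):ℝ) * (inner ℝ (b i) W : ℝ)) :=
          mul_le_mul_of_nonneg_right (hgle i) hsq
  rw [hmain, ← hWW]
  exact hfin
/-- coordinates of `toEuclideanLin` -/
lemma inner_toEuc {n : ℕ} (A : Matrix (Fin n) (Fin n) ℂ) (x : EuclideanSpace ℂ (Fin n)) :
    (inner ℂ x (Matrix.toEuclideanLin A x) : ℂ)
      = ∑ l : Fin n, (starRingEnd ℂ) (x l) * ∑ k : Fin n, A l k * x k := by
  rw [PiLp.inner_apply]
  apply Finset.sum_congr rfl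
  intro l _
  rw [RCLike.inner_apply']
  rfl

/-- pointwise double-sum decomposition of the quadratic form of `FF` -/
lemma dsum {n : ℕ} (a : ℝ) (w : Fin n → ℝ) :
    ∑ l : Fin n, ∑ k : Fin n, FF a (l:ℕ) (k:ℕ) * w l * w k
      = a * (∑ k : Fin n, (w k)^2)
        + (1-a^2) * ∑ l : Fin n, ∑ k : Fin n,
            (if (l:ℕ) < (k:ℕ) then a^((k:ℕ)-(l:ℕ)-1) * w l * w k else 0) := by
  have hpt : ∀ l k : Fin n, FF a (l:ℕ) (k:ℕ) * w l * w k
      = (if l = k then a * (w l)^2 else 0)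
        + (1-a^2)/2 * ((if (l:ℕ) < (k:ℕ) then a^((k:ℕ)-(l:ℕ)-1) * w l * w k else 0)
          + (if (k:ℕ) < (l:ℕ) then a^((l:ℕ)-(k:ℕ)-1) * w l * w k else 0)) := by
    intro l k
    rcases lt_trichotomy (l:ℕ) (k:ℕ) with h | h | h
    · have hne : l ≠ k := by intro he; rw [he] at h; omega
      have hne' : (l:ℕ) ≠ (k:ℕ) := by omega
      have hd : Nat.dist (l:ℕ) (k:ℕ) - 1 = (k:ℕ)-(l:ℕ)-1 := by rw [nat_dist_eq]; omega
      unfold FF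
      rw [if_neg hne', hd, if_neg hne, if_pos h, if_neg (by omega)]
      ring
    · have he : l = k := Fin.ext h
      subst he
      simp [FF]
      ring
    · have hne : l ≠ k := by intro he; rw [he] at h; omega
      have hne' : (l:ℕ) ≠ (k:ℕ) := by omega
      unfold FF
      rw [if_neg hne', if_neg hne, if_neg (by omega), if_pos h]
      have hd : Nat.dist (l:ℕ) (k:ℕ) - 1 = (l:ℕ)-(k:ℕ)-1 := by rw [nat_dist_eq]; omega
      rw [hd]
      ring
  simp only [hpt]
  simp only [Finset.sum_add_distrib]
  congr 1
  · -- diagonal part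
    calc ∑ l : Fin n, ∑ k : Fin n, (if l = k then a * (w l)^2 else 0)
        = ∑ l : Fin n, a * (w l)^2 := by
          apply Finset.sum_congr rfl
          intro l _
          rw [Finset.sum_ite_eq Finset.univ l (fun _ => a * (w l)^2)]
          simp
      _ = a * ∑ k : Fin n, (w k)^2 := by rw [Finset.mul_sum]
  · -- off-diagonal part
    have hsw : ∑ l : Fin n, ∑ k : Fin n,
        (if (k:ℕ) < (l:ℕ) then a^((l:ℕ)-(k:ℕ)-1) * w l * w k else 0)
        = ∑ l : Fin n, ∑ k : Fin n,
        (if (l:ℕ) < (k:ℕ) then a^((k:ℕ)-(l:ℕ)-1) * w l * w k else 0) := by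
      rw [Finset.sum_comm]
      apply Finset.sum_congr rfl
      intro l _
      apply Finset.sum_congr rfl
      intro k _
      by_cases h : (l:ℕ) < (k:ℕ)
      · rw [if_pos h, if_pos h]; ring
      · rw [if_neg h, if_neg h]
    calc ∑ l : Fin n, ∑ k : Fin n, (1-a^2)/2 * ((if (l:ℕ) < (k:ℕ) then a^((k:ℕ)-(l:ℕ)-1) * w l * w k else 0)
          + (if (k:ℕ) < (l:ℕ) then a^((l:ℕ)-(k:ℕ)-1) * w l * w k else 0))
        = (1-a^2)/2 * ((∑ l : Fin n, ∑ k : Fin n, (if (l:ℕ) < (k:ℕ) then a^((k:ℕ)-(l:ℕ)-1) * w l * w k else 0))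
          + ∑ l : Fin n, ∑ k : Fin n, (if (k:ℕ) < (l:ℕ) then a^((l:ℕ)-(k:ℕ)-1) * w l * w k else 0)) := by
          rw [mul_add, Finset.mul_sum, Finset.mul_sum, ← Finset.sum_add_distrib]
          apply Finset.sum_congr rfl
          intro l _
          rw [Finset.mul_sum, Finset.mul_sum, ← Finset.sum_add_distrib]
          apply Finset.sum_congr rfl
          intro k _
          ring
      _ = (1-a^2) * ∑ l : Fin n, ∑ k : Fin n,
            (if (l:ℕ) < (k:ℕ) then a^((k:ℕ)-(l:ℕ)-1) * w l * w k else 0) := by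
          rw [hsw]; ring

lemma double_split {𝕜 : Type*} [Field 𝕜] {n : ℕ} (D : Fin n → 𝕜) (c : 𝕜)
    (U f : Fin n → Fin n → 𝕜)
    (hpt : ∀ l k, f l k = (if l = k then D l else 0) + c * U l k) :
    ∑ l : Fin n, ∑ k : Fin n, f l k
      = (∑ l : Fin n, D l) + c * ∑ l : Fin n, ∑ k : Fin n, U l k := by
  simp only [hpt, Finset.sum_add_distrib]
  congr 1
  · apply Finset.sum_congr rfl
    intro l _
    rw [Finset.sum_ite_eq Finset.univ l (fun _ => D l)]
    simp
  · rw [Finset.mul_sum]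
    apply Finset.sum_congr rfl
    intro l _
    rw [Finset.mul_sum]

set_option maxHeartbeats 1000000 in
lemma upper {n : ℕ} (hn : 1 ≤ n) {α : ℂ} (hα : ‖α‖ < 1) {t₁ : ℝ}
    (ht₁ : t₁ ∈ Set.Ioo 0 Real.pi)
    (hleast : ∀ t, t ∈ Set.Ioo 0 Real.pi → PP (‖α‖) t n = 0 → t₁ ≤ t)
    (x : EuclideanSpace ℂ (Fin n)) (hx : ‖x‖ = 1) :
    ‖(inner ℂ x (Matrix.toEuclideanLin (Tmat n α) x) : ℂ)‖ ≤ gg (‖α‖) t₁ := by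
  set a := ‖α‖ with ha
  have ha0 : 0 ≤ a := norm_nonneg α
  set y : Fin n → ℝ := fun k => ‖x k‖ with hy
  have hx2 : ∑ k : Fin n, (y k)^2 = 1 := by
    have h1 : ‖x‖^2 = 1 := by rw [hx]; norm_num
    rw [EuclideanSpace.norm_eq, Real.sq_sqrt (Finset.sum_nonneg (fun i _ => sq_nonneg _))] at h1
    rw [← h1]
  have hTabs : ∀ l k : Fin n, ‖Tmat n α l k‖ * (y l * y k)
      = (if l = k then a * (y l)^2 else 0)
        + (1-a^2) * (if (l:ℕ) < (k:ℕ) then a^((k:ℕ)-(l:ℕ)-1) * y l * y k else 0) := by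
    intro l k
    have h1a2 : (0:ℝ) ≤ 1 - a^2 := by nlinarith
    rcases lt_trichotomy (l:ℕ) (k:ℕ) with h | h | h
    · have hne : l ≠ k := fun he => by rw [he] at h; omega
      have hlt : l < k := by rw [Fin.lt_def]; exact h
      have hT : Tmat n α l k = ((1 - a ^ 2 : ℝ) : ℂ) * (-α) ^ ((k:ℕ) - (l:ℕ) - 1) := by
        unfold Tmat
        rw [Matrix.of_apply, if_neg hne, if_pos hlt, ha]
      rw [hT, if_neg hne, if_pos h, norm_mul, norm_pow, Complex.norm_real, norm_neg, Real.norm_eq_abs,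
        abs_of_nonneg h1a2]
      push_cast
      ring
    · have he : l = k := Fin.ext h
      subst he
      have hT : Tmat n α l l = (starRingEnd ℂ) α := by
        unfold Tmat; rw [Matrix.of_apply, if_pos rfl]
      rw [hT, Complex.norm_conj, if_pos rfl, if_neg (by omega)]
      ring
    · have hne : l ≠ k := fun he => by rw [he] at h; omega
      have hnlt : ¬ (l < k) := by rw [Fin.lt_def]; omega
      have hT : Tmat n α l k = 0 := by
        unfold Tmat; rw [Matrix.of_apply, if_neg hne, if_neg hnlt]
      rw [hT, if_neg hne, if_neg (by omega)]
      simp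
  have h1 : ‖(inner ℂ x (Matrix.toEuclideanLin (Tmat n α) x) : ℂ)‖
      ≤ ∑ l : Fin n, ∑ k : Fin n, ‖Tmat n α l k‖ * (y l * y k) := by
    rw [inner_toEuc]
    refine le_trans (norm_sum_le _ _) ?_
    apply Finset.sum_le_sum
    intro l _
    rw [norm_mul]
    calc ‖(starRingEnd ℂ) (x l)‖ * ‖∑ k : Fin n, Tmat n α l k * x k‖
        ≤ ‖(starRingEnd ℂ) (x l)‖ * ∑ k : Fin n, ‖Tmat n α l k * x k‖ :=
          mul_le_mul_of_nonneg_left (norm_sum_le _ _) (norm_nonneg _)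
      _ = ∑ k : Fin n, ‖Tmat n α l k‖ * (y l * y k) := by
          rw [Finset.mul_sum]
          apply Finset.sum_congr rfl
          intro k _
          rw [norm_mul, RCLike.norm_conj, hy]
          beta_reduce
          ring
  have h2 : ∑ l : Fin n, ∑ k : Fin n, ‖Tmat n α l k‖ * (y l * y k)
      = ∑ l : Fin n, ∑ k : Fin n, FF a (l:ℕ) (k:ℕ) * y l * y k := by
    rw [double_split (fun l => a * (y l)^2) (1-a^2) _ _ hTabs, dsum a y]
    congr 1
    rw [Finset.mul_sum]
  calc ‖(inner ℂ x (Matrix.toEuclideanLin (Tmat n α) x) : ℂ)‖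
      ≤ ∑ l : Fin n, ∑ k : Fin n, ‖Tmat n α l k‖ * (y l * y k) := h1
    _ = ∑ l : Fin n, ∑ k : Fin n, FF a (l:ℕ) (k:ℕ) * y l * y k := h2
    _ ≤ gg a t₁ * ∑ k : Fin n, (y k)^2 := spec hn ha0 hα ht₁ hleast y
    _ = gg a t₁ := by rw [hx2, mul_one]
set_option maxHeartbeats 1000000 in
lemma lower {n : ℕ} (hn : 1 ≤ n) {α : ℂ} (hα : ‖α‖ < 1) {t : ℝ}
    (ht : t ∈ Set.Ioo 0 Real.pi) (hPt : PP (‖α‖) t n = 0) :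
    ∃ x : EuclideanSpace ℂ (Fin n), ‖x‖ = 1 ∧
      ‖(inner ℂ x (Matrix.toEuclideanLin (Tmat n α) x) : ℂ)‖
        = |gg (‖α‖) t - 2 * ‖α‖| := by
  set a := ‖α‖ with ha
  have ha0 : 0 ≤ a := norm_nonneg α
  -- the unimodular β
  obtain ⟨β, hβ1, hβ2⟩ : ∃ β : ℂ, ‖β‖ = 1 ∧ (starRingEnd ℂ) α = -(a:ℂ)*β := by
    by_cases hα0 : α = 0
    · refine ⟨1, by simp, ?_⟩
      rw [hα0, ha, hα0]
      simp
    · have ha0' : a ≠ 0 := by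
        rw [ha]; exact norm_ne_zero_iff.mpr hα0
      refine ⟨-(starRingEnd ℂ) α/(a:ℂ), ?_, ?_⟩
      · rw [norm_div, norm_neg, Complex.norm_conj, Complex.norm_real, Real.norm_eq_abs,
          abs_of_nonneg ha0, ← ha, div_self ha0']
      · have hca : (a:ℂ) ≠ 0 := by exact_mod_cast ha0'
        field_simp
  have hβc : β * (starRingEnd ℂ) β = 1 := by
    rw [Complex.mul_conj, ← Complex.sq_norm, hβ1]
    norm_num
  have hβ3 : β * (-α) = (a:ℂ) := by
    have hαval : α = -(a:ℂ) * (starRingEnd ℂ) β := by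
      have := congrArg (starRingEnd ℂ) hβ2
      simpa using this
    rw [hαval]
    have : β * -(-(a:ℂ) * (starRingEnd ℂ) β) = (a:ℂ) * (β * (starRingEnd ℂ) β) := by ring
    rw [this, hβc, mul_one]
  -- the normalized eigenvector
  have hsin : 0 < Real.sin t := Real.sin_pos_of_pos_of_lt_pi ht.1 ht.2
  have hvpos : 0 < ∑ k : Fin n, (vv a t (k:ℕ))^2 := by
    have h0 : 0 < (vv a t ((⟨0, by omega⟩ : Fin n):ℕ))^2 := by
      show 0 < (vv a t 0)^2
      have hv0 : vv a t 0 = Real.sin t := by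
        unfold vv
        norm_num
      rw [hv0]
      positivity
    calc (0:ℝ) < (vv a t ((⟨0, by omega⟩ : Fin n):ℕ))^2 := h0
      _ ≤ ∑ k : Fin n, (vv a t (k:ℕ))^2 :=
          Finset.single_le_sum (f := fun k : Fin n => (vv a t (k:ℕ))^2)
            (fun i _ => sq_nonneg _) (Finset.mem_univ _)
  set N : ℝ := Real.sqrt (∑ k : Fin n, (vv a t (k:ℕ))^2) with hN
  have hNpos : 0 < N := Real.sqrt_pos.mpr hvpos
  set w : Fin n → ℝ := fun k => vv a t (k:ℕ) / N with hw
  have hw2 : ∑ k : Fin n, (w k)^2 = 1 := by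
    rw [hw]
    simp only [div_pow]
    rw [← Finset.sum_div, hN, Real.sq_sqrt hvpos.le, div_self (ne_of_gt hvpos)]
  have heigw : ∀ l : Fin n, ∑ k : Fin n, FF a (l:ℕ) (k:ℕ) * w k = gg a t * w l := by
    intro l
    rw [hw]
    simp only [div_eq_mul_inv]
    rw [show ∑ k : Fin n, FF a (l:ℕ) (k:ℕ) * (vv a t (k:ℕ) * N⁻¹)
        = (∑ k : Fin n, FF a (l:ℕ) (k:ℕ) * vv a t (k:ℕ)) * N⁻¹ from by
      rw [Finset.sum_mul]; apply Finset.sum_congr rfl; intros; ring]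
    rw [eig ha0 hα hPt l]
    ring
  -- quadratic form value
  have hq : ∑ l : Fin n, ∑ k : Fin n, FF a (l:ℕ) (k:ℕ) * w l * w k = gg a t := by
    calc ∑ l : Fin n, ∑ k : Fin n, FF a (l:ℕ) (k:ℕ) * w l * w k
        = ∑ l : Fin n, gg a t * (w l)^2 := by
          apply Finset.sum_congr rfl
          intro l _
          rw [show ∑ k : Fin n, FF a (l:ℕ) (k:ℕ) * w l * w k
              = (∑ k : Fin n, FF a (l:ℕ) (k:ℕ) * w k) * w l from by
            rw [Finset.sum_mul]; apply Finset.sum_congr rfl; intros; ring]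
          rw [heigw l]
          ring
      _ = gg a t * ∑ k : Fin n, (w k)^2 := by
          rw [Finset.mul_sum]
      _ = gg a t := by rw [hw2, mul_one]
  have hUP : (1-a^2) * (∑ l : Fin n, ∑ k : Fin n,
      (if (l:ℕ) < (k:ℕ) then a^((k:ℕ)-(l:ℕ)-1) * w l * w k else 0)) = gg a t - a := by
    have := dsum a w
    rw [hq, hw2, mul_one] at this
    linarith
  -- the test vector
  set x : EuclideanSpace ℂ (Fin n) :=
    (WithLp.equiv 2 (Fin n → ℂ)).symm (fun k => β^(k:ℕ) * ((w k : ℝ) : ℂ)) with hx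
  have hxapp : ∀ k : Fin n, x k = β^(k:ℕ) * ((w k : ℝ) : ℂ) := fun k => rfl
  have hxnorm : ‖x‖ = 1 := by
    rw [EuclideanSpace.norm_eq]
    have : ∀ k : Fin n, ‖x k‖^2 = (w k)^2 := by
      intro k
      rw [hxapp, norm_mul, norm_pow, hβ1, one_pow, one_mul,
        Complex.norm_real, Real.norm_eq_abs, sq_abs]
    rw [Finset.sum_congr rfl (fun k _ => this k), hw2, Real.sqrt_one]
  -- pointwise value
  have hpt : ∀ l k : Fin n, (starRingEnd ℂ) (x l) * (Tmat n α l k * x k)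
      = (if l = k then (starRingEnd ℂ) α * (((w l)^2 : ℝ) : ℂ) else 0)
        + β * (((1-a^2) : ℝ) : ℂ)
          * (((if (l:ℕ) < (k:ℕ) then a^((k:ℕ)-(l:ℕ)-1) * w l * w k else 0) : ℝ) : ℂ) := by
    intro l k
    have hβl : (starRingEnd ℂ) (β^(l:ℕ)) * β^(l:ℕ) = 1 := by
      rw [map_pow, ← mul_pow, mul_comm ((starRingEnd ℂ) β) β, hβc, one_pow]
    rcases lt_trichotomy (l:ℕ) (k:ℕ) with h | h | h
    · have hne : l ≠ k := fun he => by rw [he] at h; omega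
      have hlt : l < k := by rw [Fin.lt_def]; exact h
      obtain ⟨m, hm⟩ : ∃ m, (k:ℕ) = (l:ℕ) + m + 1 := ⟨(k:ℕ)-(l:ℕ)-1, by omega⟩
      have hT : Tmat n α l k = ((1 - a ^ 2 : ℝ) : ℂ) * (-α) ^ ((k:ℕ) - (l:ℕ) - 1) := by
        unfold Tmat
        rw [Matrix.of_apply, if_neg hne, if_pos hlt, ha]
      have hexp : (k:ℕ) - (l:ℕ) - 1 = m := by omega
      rw [hT, if_neg hne, if_pos h]
      rw [hexp]
      rw [hxapp, hxapp, hm, map_mul, Complex.conj_ofReal]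
      have hgeom : β^m * (-α)^m = ((a^m : ℝ) : ℂ) := by
        rw [← mul_pow, hβ3]
        push_cast
        rfl
      push_cast at hgeom ⊢
      linear_combination
        (β * ((1:ℂ)-(a:ℂ)^2) * ((w l:ℝ):ℂ) * ((w k:ℝ):ℂ)
          * ((starRingEnd ℂ) (β^(l:ℕ))) * β^(l:ℕ)) * hgeom
        + (β * ((1:ℂ)-(a:ℂ)^2) * ((w l:ℝ):ℂ) * ((w k:ℝ):ℂ) * ((a:ℂ))^m) * hβl
    · have he : l = k := Fin.ext h
      subst he
      have hT : Tmat n α l l = (starRingEnd ℂ) α := by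
        unfold Tmat; rw [Matrix.of_apply, if_pos rfl]
      rw [hT, if_pos rfl, if_neg (by omega), hxapp, map_mul, Complex.conj_ofReal]
      push_cast
      linear_combination ((starRingEnd ℂ) α * ((w l:ℝ):ℂ) * ((w l:ℝ):ℂ)) * hβl
    · have hne : l ≠ k := fun he => by rw [he] at h; omega
      have hnlt : ¬ (l < k) := by rw [Fin.lt_def]; omega
      have hT : Tmat n α l k = 0 := by
        unfold Tmat; rw [Matrix.of_apply, if_neg hne, if_neg hnlt]
      rw [hT, if_neg hne, if_neg (by omega)]
      push_cast
      ring
  -- total value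
  have hval : (inner ℂ x (Matrix.toEuclideanLin (Tmat n α) x) : ℂ)
      = β * ((gg a t - 2*a : ℝ) : ℂ) := by
    rw [inner_toEuc]
    have hmulsum : ∑ l : Fin n, (starRingEnd ℂ) (x l) * ∑ k : Fin n, Tmat n α l k * x k
        = ∑ l : Fin n, ∑ k : Fin n, (starRingEnd ℂ) (x l) * (Tmat n α l k * x k) := by
      apply Finset.sum_congr rfl
      intro l _
      rw [Finset.mul_sum]
    rw [hmulsum, double_split _ _ _ _ hpt]
    have hdiag : ∑ l : Fin n, (starRingEnd ℂ) α * (((w l)^2 : ℝ) : ℂ)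
        = (starRingEnd ℂ) α := by
      rw [← Finset.mul_sum]
      rw [show ∑ l : Fin n, (((w l)^2 : ℝ) : ℂ) = ((∑ l : Fin n, (w l)^2 : ℝ) : ℂ) from by push_cast; rfl]
      rw [hw2]
      simp
    have hoff : ∑ l : Fin n, ∑ k : Fin n,
        (((if (l:ℕ) < (k:ℕ) then a^((k:ℕ)-(l:ℕ)-1) * w l * w k else 0) : ℝ) : ℂ)
        = (((∑ l : Fin n, ∑ k : Fin n,
            (if (l:ℕ) < (k:ℕ) then a^((k:ℕ)-(l:ℕ)-1) * w l * w k else 0)) : ℝ) : ℂ) := by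
      push_cast
      rfl
    rw [hdiag, hoff, hβ2]
    have hcast : (((1-a^2) : ℝ) : ℂ) * ((∑ l : Fin n, ∑ k : Fin n,
        (if (l:ℕ) < (k:ℕ) then a^((k:ℕ)-(l:ℕ)-1) * w l * w k else 0) : ℝ) : ℂ)
        = ((gg a t - a : ℝ) : ℂ) := by
      rw [show (((1-a^2) : ℝ) : ℂ) * ((∑ l : Fin n, ∑ k : Fin n,
          (if (l:ℕ) < (k:ℕ) then a^((k:ℕ)-(l:ℕ)-1) * w l * w k else 0) : ℝ) : ℂ)
          = (((1-a^2) * ∑ l : Fin n, ∑ k : Fin n,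
          (if (l:ℕ) < (k:ℕ) then a^((k:ℕ)-(l:ℕ)-1) * w l * w k else 0) : ℝ) : ℂ) from by push_cast; rfl]
      rw [hUP]
    calc -(a:ℂ)*β + β * (((1-a^2) : ℝ) : ℂ) * ((∑ l : Fin n, ∑ k : Fin n,
          (if (l:ℕ) < (k:ℕ) then a^((k:ℕ)-(l:ℕ)-1) * w l * w k else 0) : ℝ) : ℂ)
        = -(a:ℂ)*β + β * ((gg a t - a : ℝ) : ℂ) := by
          rw [mul_assoc, hcast]
      _ = β * ((gg a t - 2*a : ℝ) : ℂ) := by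
          push_cast
          ring
  refine ⟨x, hxnorm, ?_⟩
  rw [hval, norm_mul, hβ1, one_mul, Complex.norm_real,
    Real.norm_eq_abs]

end NRaux

open NRaux in
/-- For `n ≥ 2`, `α ∈ ℂ` with `|α| < 1` and `a = |α|`, with `t₁` and `tₙ` the
smallest and largest zeros in `(0, π)` of
`q_{n,a}(t) = sin((n+1)t) − 2a sin(nt) + a² sin((n−1)t)`, the numerical radius of
`T_n(α)` satisfies `m_n(a) ≤ w(T_n(α)) ≤ M_n(a)`, where
`m_n(a) = max { |(1+a²)cos t₁ − 2a|/(1 − 2a cos t₁ + a²),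
                (−(1+a²)cos tₙ + 2a)/(1 − 2a cos tₙ + a²) }` and
`M_n(a) = max { ((1−3a²)cos t₁ + 2a³)/(1 − 2a cos t₁ + a²),
                (−(1+a²)cos tₙ + 2a)/(1 − 2a cos tₙ + a²) }`. -/
theorem numRadius_Tmat_bounds (n : ℕ) (hn : 2 ≤ n) (α : ℂ) (hα : ‖α‖ < 1)
    (t₁ tn : ℝ)
    (ht₁ : IsLeast {t : ℝ | t ∈ Set.Ioo 0 Real.pi ∧
      Real.sin (((n : ℝ) + 1) * t) - 2 * ‖α‖ * Real.sin ((n : ℝ) * t)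
        + ‖α‖ ^ 2 * Real.sin (((n : ℝ) - 1) * t) = 0} t₁)
    (htn : IsGreatest {t : ℝ | t ∈ Set.Ioo 0 Real.pi ∧
      Real.sin (((n : ℝ) + 1) * t) - 2 * ‖α‖ * Real.sin ((n : ℝ) * t)
        + ‖α‖ ^ 2 * Real.sin (((n : ℝ) - 1) * t) = 0} tn) :
    max (|(1 + ‖α‖ ^ 2) * Real.cos t₁ - 2 * ‖α‖|
          / (1 - 2 * ‖α‖ * Real.cos t₁ + ‖α‖ ^ 2))
        ((-((1 + ‖α‖ ^ 2) * Real.cos tn) + 2 * ‖α‖)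
          / (1 - 2 * ‖α‖ * Real.cos tn + ‖α‖ ^ 2))
      ≤ numRadius (Tmat n α) ∧
    numRadius (Tmat n α)
      ≤ max (((1 - 3 * ‖α‖ ^ 2) * Real.cos t₁ + 2 * ‖α‖ ^ 3)
            / (1 - 2 * ‖α‖ * Real.cos t₁ + ‖α‖ ^ 2))
          ((-((1 + ‖α‖ ^ 2) * Real.cos tn) + 2 * ‖α‖)
            / (1 - 2 * ‖α‖ * Real.cos tn + ‖α‖ ^ 2)) := by
  have hn1 : 1 ≤ n := by omega
  have ha0 : 0 ≤ ‖α‖ := norm_nonneg α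
  have ht₁m : t₁ ∈ Set.Ioo 0 Real.pi := ht₁.1.1
  have hPt₁ : PP (‖α‖) t₁ n = 0 := ht₁.1.2
  have htnm : tn ∈ Set.Ioo 0 Real.pi := htn.1.1
  have hPtn : PP (‖α‖) tn n = 0 := htn.1.2
  have hleast : ∀ t, t ∈ Set.Ioo 0 Real.pi → PP (‖α‖) t n = 0 → t₁ ≤ t :=
    fun t h1 h2 => ht₁.2 ⟨h1, h2⟩
  set a := ‖α‖ with ha
  have hd₁ := dd_pos ha0 hα t₁
  have hdn := dd_pos ha0 hα tn
  set S := {r : ℝ | ∃ x : EuclideanSpace ℂ (Fin n), ‖x‖ = 1 ∧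
    r = ‖(inner ℂ x (Matrix.toEuclideanLin (Tmat n α) x) : ℂ)‖} with hSdef
  have hnum : numRadius (Tmat n α) = sSup S := rfl
  have hub : ∀ r ∈ S, r ≤ gg a t₁ := by
    rintro r ⟨x, hx1, rfl⟩
    exact upper hn1 hα ht₁m hleast x hx1
  have hbdd : BddAbove S := ⟨gg a t₁, fun r hr => hub r hr⟩
  obtain ⟨x₁, hx₁, hv₁⟩ := lower hn1 hα ht₁m hPt₁
  obtain ⟨x₂, hx₂, hv₂⟩ := lower hn1 hα htnm hPtn
  have hmem1 : |gg a t₁ - 2*a| ∈ S := ⟨x₁, hx₁, hv₁.symm⟩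
  have hmem2 : |gg a tn - 2*a| ∈ S := ⟨x₂, hx₂, hv₂.symm⟩
  have hne : S.Nonempty := ⟨_, hmem1⟩
  have hgg₁ : gg a t₁ - 2*a = ((1 + a^2) * Real.cos t₁ - 2*a)/(dd a t₁) := by
    unfold gg
    field_simp
    unfold dd
    ring
  have hggn : gg a tn - 2*a = ((1 + a^2) * Real.cos tn - 2*a)/(dd a tn) := by
    unfold gg
    field_simp
    unfold dd
    ring
  constructor
  · rw [hnum]
    apply max_le
    · have harm : |(1 + a^2) * Real.cos t₁ - 2*a| / (1 - 2*a*Real.cos t₁ + a^2)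
          = |gg a t₁ - 2*a| := by
        rw [hgg₁, abs_div, abs_of_pos hd₁]
        unfold dd
        rfl
      rw [harm]
      exact le_csSup hbdd hmem1
    · have harm2 : (-((1 + a^2) * Real.cos tn) + 2*a) / (1 - 2*a*Real.cos tn + a^2)
          ≤ |gg a tn - 2*a| := by
        have he : (-((1 + a^2) * Real.cos tn) + 2*a) / (1 - 2*a*Real.cos tn + a^2)
            = -(gg a tn - 2*a) := by
          rw [hggn, ← neg_div]
          unfold dd
          ring_nf
        rw [he]
        exact neg_le_abs _
      exact harm2.trans (le_csSup hbdd hmem2)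
  · rw [hnum]
    apply csSup_le hne
    intro r hr
    refine (hub r hr).trans (le_trans (le_of_eq ?_) (le_max_left _ _))
    unfold gg dd
    rfl
end

section
/- For every integer n ≥ 2, the numerical radius of the n×n nilpotent Jordan block S_n (the matrix with 1 in each entry of the subdiagonal and 0 elsewhere) equals cos(π/(n+1)). -/
section JordanAux

open Finset

/-- `θ = π / (n+1)`. -/
noncomputable def jtheta (n : ℕ) : ℝ := Real.pi / ((n:ℝ) + 1)

/-- `w k = sin (k θ)`. -/
noncomputable def jw (n k : ℕ) : ℝ := Real.sin ((k:ℝ) * jtheta n)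

lemma jw_rec (n k : ℕ) : jw n k + jw n (k+2) = 2 * Real.cos (jtheta n) * jw n (k+1) := by
  unfold jw
  push_cast
  have h1 : ((k:ℝ)) * jtheta n = ((k:ℝ)+1) * jtheta n - jtheta n := by ring
  have h2 : ((k:ℝ)+2) * jtheta n = ((k:ℝ)+1) * jtheta n + jtheta n := by ring
  rw [h1, h2, Real.sin_sub, Real.sin_add]; ring

lemma jtheta_pos (n : ℕ) : 0 < jtheta n := by
  have := Real.pi_pos; unfold jtheta; positivity

lemma jw_pos (n : ℕ) {k : ℕ} (h1 : 1 ≤ k) (h2 : k ≤ n) : 0 < jw n k := by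
  apply Real.sin_pos_of_pos_of_lt_pi
  · have hk : (0:ℝ) < (k:ℝ) := by exact_mod_cast Nat.pos_of_ne_zero (by omega)
    have := jtheta_pos n
    positivity
  · have hk : (k:ℝ) < (n:ℝ)+1 := by exact_mod_cast Nat.lt_succ_of_le h2
    calc (k:ℝ) * jtheta n < ((n:ℝ)+1) * jtheta n :=
          mul_lt_mul_of_pos_right hk (jtheta_pos n)
      _ = Real.pi := by unfold jtheta; field_simp

lemma jw_zero (n : ℕ) : jw n 0 = 0 := by simp [jw]

lemma jw_top (n : ℕ) : jw n (n+1) = 0 := by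
  unfold jw jtheta
  have h : ((n:ℝ)+1) * (Real.pi / ((n:ℝ)+1)) = Real.pi := by field_simp
  push_cast
  rw [h, Real.sin_pi]

lemma jcos_nonneg (n : ℕ) (hn : 2 ≤ n) : 0 ≤ Real.cos (jtheta n) := by
  apply Real.cos_nonneg_of_mem_Icc
  have hpi := Real.pi_pos
  have ht : 0 < jtheta n := jtheta_pos n
  constructor
  · linarith
  · unfold jtheta
    rw [div_le_div_iff₀ (by positivity) (by norm_num)]
    have h3 : (3:ℝ) ≤ (n:ℝ)+1 := by exact_mod_cast by omega
    nlinarith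

lemma jbound (n : ℕ) (a : ℕ → ℝ) : ∀ m, m + 1 ≤ n →
    ∑ k ∈ range m, a k * a (k+1) ≤ Real.cos (jtheta n) * ∑ k ∈ range m, (a k)^2
      + jw n m / (2 * jw n (m+1)) * (a m)^2 := by
  intro m
  induction m with
  | zero => intro _; simp [jw_zero]
  | succ m ih =>
    intro hm1
    have ih' := ih (by omega)
    rw [Finset.sum_range_succ, Finset.sum_range_succ (fun k => (a k)^2)]
    have hw1 : 0 < jw n (m+1) := jw_pos n (by omega) (by omega)
    have hw2 : 0 < jw n (m+2) := jw_pos n (by omega) (by omega)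
    have hrec := jw_rec n m
    have key : a m * a (m+1) + jw n m / (2 * jw n (m+1)) * (a m)^2
        ≤ Real.cos (jtheta n) * (a m)^2 + jw n (m+1) / (2 * jw n (m+2)) * (a (m+1))^2 := by
      rw [← sub_nonneg]
      have hid : Real.cos (jtheta n) * (a m)^2 + jw n (m+1) / (2 * jw n (m+2)) * (a (m+1))^2
          - (a m * a (m+1) + jw n m / (2 * jw n (m+1)) * (a m)^2)
          = (jw n (m+2) * a m - jw n (m+1) * a (m+1))^2 / (2 * jw n (m+1) * jw n (m+2))
            + (2 * Real.cos (jtheta n) * jw n (m+1) - jw n m - jw n (m+2)) * (a m)^2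
              / (2 * jw n (m+1)) := by
        field_simp
        ring
      rw [hid, show 2 * Real.cos (jtheta n) * jw n (m+1) - jw n m - jw n (m+2) = 0 by linarith]
      positivity
    linarith

lemma jbound' (n : ℕ) (hn : 2 ≤ n) (a : ℕ → ℝ) :
    ∑ k ∈ range (n-1), a k * a (k+1) ≤ Real.cos (jtheta n) * ∑ k ∈ range n, (a k)^2 := by
  have h := jbound n a (n-1) (by omega)
  have hn1 : n - 1 + 1 = n := by omega
  rw [hn1] at h
  have hwn : 0 < jw n n := jw_pos n (by omega) le_rfl
  have hco : jw n (n-1) / (2 * jw n n) = Real.cos (jtheta n) := by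
    have hrec := jw_rec n (n-1)
    rw [show n - 1 + 2 = n + 1 by omega, jw_top, hn1] at hrec
    field_simp
    linarith
  rw [hco] at h
  calc ∑ k ∈ range (n-1), a k * a (k+1)
      ≤ Real.cos (jtheta n) * ∑ k ∈ range (n-1), (a k)^2 + Real.cos (jtheta n) * (a (n-1))^2 := h
    _ = Real.cos (jtheta n) * ∑ k ∈ range n, (a k)^2 := by
        have hsum : ∑ k ∈ range ((n-1)+1), (a k)^2
            = ∑ k ∈ range (n-1), (a k)^2 + (a (n-1))^2 := Finset.sum_range_succ _ _
        rw [hn1] at hsum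
        rw [hsum]; ring

lemma jeq (n : ℕ) : ∑ k ∈ range n, jw n (k+1) * jw n (k+2)
    = Real.cos (jtheta n) * ∑ k ∈ range n, (jw n (k+1))^2 := by
  have main : ∀ m, ∑ k ∈ range m, jw n (k+1) * jw n (k+2)
      = Real.cos (jtheta n) * ∑ k ∈ range m, (jw n (k+1))^2 + jw n m * jw n (m+1) / 2 := by
    intro m
    induction m with
    | zero => simp [jw_zero]
    | succ m ih =>
      rw [Finset.sum_range_succ, Finset.sum_range_succ (fun k => (jw n (k+1))^2), ih]
      have hrec := jw_rec n m
      linear_combination (jw n (m+1) / 2) * hrec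
  rw [main n, jw_top, mul_zero, zero_div, add_zero]

lemma jeq' (n : ℕ) (hn : 2 ≤ n) : ∑ k ∈ range (n-1), jw n (k+1) * jw n (k+2)
    = Real.cos (jtheta n) * ∑ k ∈ range n, (jw n (k+1))^2 := by
  rw [← jeq n]
  have hn1 : n - 1 + 1 = n := by omega
  have hsum : ∑ k ∈ range ((n-1)+1), jw n (k+1) * jw n (k+2)
      = ∑ k ∈ range (n-1), jw n (k+1) * jw n (k+2) + jw n ((n-1)+1) * jw n ((n-1)+2) :=
    Finset.sum_range_succ _ _
  rw [hn1, show n - 1 + 2 = n + 1 by omega, jw_top, mul_zero, add_zero] at hsum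
  rw [hsum]

lemma jQ_pos (n : ℕ) (hn : 2 ≤ n) : 0 < ∑ k ∈ range n, (jw n (k+1))^2 := by
  have h1 : 0 < (jw n 1)^2 := pow_pos (jw_pos n le_rfl (by omega)) 2
  have h0 : (0:ℕ) ∈ range n := by simp; omega
  calc (0:ℝ) < (jw n (0+1))^2 := h1
    _ ≤ ∑ k ∈ range n, (jw n (k+1))^2 :=
      Finset.single_le_sum (f := fun k => (jw n (k+1))^2) (fun k _ => sq_nonneg _) h0

open Finset in
lemma inner_jordan (n : ℕ) (x : EuclideanSpace ℂ (Fin n)) :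
    (inner ℂ x (Matrix.toEuclideanLin (Matrix.of fun r s : Fin n =>
        if (r : ℕ) = (s : ℕ) + 1 then (1 : ℂ) else 0) x) : ℂ)
    = ∑ k ∈ range (n-1),
        (starRingEnd ℂ) (if h : k+1 < n then x ⟨k+1, h⟩ else 0)
          * (if h : k < n then x ⟨k, h⟩ else 0) := by
  set Y : ℕ → ℂ := fun k => if h : k < n then x ⟨k, h⟩ else 0 with hY
  have hYx : ∀ r : Fin n, x r = Y r := by
    intro r; simp [hY, r.isLt]
  rw [Matrix.toEuclideanLin_apply, PiLp.inner_apply]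
  simp only [RCLike.inner_apply, PiLp.toLp_apply, Matrix.mulVec, dotProduct,
    Matrix.of_apply, ite_mul, one_mul, zero_mul]
  refine (Finset.sum_congr rfl fun r _ => mul_comm _ _).trans ?_
  calc (∑ r : Fin n, (starRingEnd ℂ) (x r) * ∑ s : Fin n, if (r:ℕ) = (s:ℕ) + 1 then x s else 0)
      = ∑ r : Fin n, ∑ s : Fin n,
          if (r:ℕ) = (s:ℕ) + 1 then (starRingEnd ℂ) (Y r) * Y s else 0 := by
        refine Finset.sum_congr rfl fun r _ => ?_
        rw [Finset.mul_sum]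
        exact Finset.sum_congr rfl fun s _ => by rw [hYx r, hYx s, mul_ite, mul_zero]
    _ = ∑ r ∈ range n, ∑ s ∈ range n,
          if r = s + 1 then (starRingEnd ℂ) (Y r) * Y s else 0 := by
        rw [← Fin.sum_univ_eq_sum_range (fun r => ∑ s ∈ range n,
          if r = s + 1 then (starRingEnd ℂ) (Y r) * Y s else 0)]
        exact Finset.sum_congr rfl fun r _ =>
          (Fin.sum_univ_eq_sum_range
            (fun s => if (r:ℕ) = s + 1 then (starRingEnd ℂ) (Y r) * Y s else 0) n)
    _ = ∑ s ∈ range n, ∑ r ∈ range n,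
          if r = s + 1 then (starRingEnd ℂ) (Y r) * Y s else 0 := Finset.sum_comm
    _ = ∑ s ∈ range n, if s + 1 ∈ range n then (starRingEnd ℂ) (Y (s+1)) * Y s else 0 :=
        Finset.sum_congr rfl fun s _ => Finset.sum_ite_eq' _ _ _
    _ = ∑ k ∈ range (n-1), (starRingEnd ℂ) (Y (k+1)) * Y k := by
        rw [← Finset.sum_filter]
        apply Finset.sum_congr
        · ext k; simp [Finset.mem_filter]; omega
        · intros; rfl

lemma norm_sq_sum (n : ℕ) (x : EuclideanSpace ℂ (Fin n)) (hx : ‖x‖ = 1) :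
    ∑ k ∈ range n, ‖if h : k < n then x ⟨k, h⟩ else 0‖^2 = 1 := by
  have h1 : ∑ k ∈ range n, ‖if h : k < n then x ⟨k, h⟩ else 0‖^2
      = ∑ i : Fin n, ‖x i‖^2 := by
    rw [← Fin.sum_univ_eq_sum_range (fun k => ‖if h : k < n then x ⟨k, h⟩ else 0‖^2)]
    exact Finset.sum_congr rfl fun i _ => by simp [i.isLt]
  have h2 : Real.sqrt (∑ i : Fin n, ‖x i‖^2) = 1 := by
    rw [← EuclideanSpace.norm_eq, hx]
  rw [Real.sqrt_eq_one] at h2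
  rw [h1, h2]

/-- Upper bound: every element of the numerical-range-norm set is `≤ cos θ`. -/
lemma jordan_upper (n : ℕ) (hn : 2 ≤ n) (x : EuclideanSpace ℂ (Fin n)) (hx : ‖x‖ = 1) :
    ‖(inner ℂ x (Matrix.toEuclideanLin (Matrix.of fun r s : Fin n =>
        if (r : ℕ) = (s : ℕ) + 1 then (1 : ℂ) else 0) x) : ℂ)‖ ≤ Real.cos (jtheta n) := by
  rw [inner_jordan]
  set Y : ℕ → ℂ := fun k => if h : k < n then x ⟨k, h⟩ else 0 with hY
  set a : ℕ → ℝ := fun k => ‖Y k‖ with ha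
  calc ‖∑ k ∈ range (n-1), (starRingEnd ℂ) (Y (k+1)) * Y k‖
      ≤ ∑ k ∈ range (n-1), ‖(starRingEnd ℂ) (Y (k+1)) * Y k‖ := norm_sum_le _ _
    _ = ∑ k ∈ range (n-1), a k * a (k+1) := by
        refine Finset.sum_congr rfl fun k _ => ?_
        rw [norm_mul, RCLike.norm_conj, mul_comm]
    _ ≤ Real.cos (jtheta n) * ∑ k ∈ range n, (a k)^2 := jbound' n hn a
    _ = Real.cos (jtheta n) := by
        rw [show ∑ k ∈ range n, (a k)^2 = 1 from norm_sq_sum n x hx, mul_one]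
lemma jordan_witness (n : ℕ) (hn : 2 ≤ n) :
    ∃ x : EuclideanSpace ℂ (Fin n), ‖x‖ = 1 ∧
      Real.cos (jtheta n) = ‖(inner ℂ x (Matrix.toEuclideanLin (Matrix.of fun r s : Fin n =>
        if (r : ℕ) = (s : ℕ) + 1 then (1 : ℂ) else 0) x) : ℂ)‖ := by
  set Q : ℝ := ∑ k ∈ range n, (jw n (k+1))^2 with hQ
  have hQpos : 0 < Q := jQ_pos n hn
  set N : ℝ := Real.sqrt Q with hN
  have hNpos : 0 < N := Real.sqrt_pos.mpr hQpos
  have hN2 : N^2 = Q := Real.sq_sqrt hQpos.le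
  set x : EuclideanSpace ℂ (Fin n) := WithLp.toLp 2 (fun i : Fin n => ((jw n ((i:ℕ)+1) / N : ℝ) : ℂ)) with hx
  have hxk : ∀ (k : ℕ) (h : k < n), x ⟨k, h⟩ = ((jw n (k+1) / N : ℝ) : ℂ) := fun k h => rfl
  have hnorm : ‖x‖ = 1 := by
    rw [EuclideanSpace.norm_eq]
    have h1 : ∑ i : Fin n, ‖x i‖^2 = ∑ k ∈ range n, (jw n (k+1)/N)^2 := by
      rw [← Fin.sum_univ_eq_sum_range (fun k => (jw n (k+1)/N)^2)]
      refine Finset.sum_congr rfl fun i _ => ?_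
      rw [hx]
      simp only [Complex.norm_real]
      rw [Real.norm_eq_abs, sq_abs]
    rw [h1]
    have h2 : ∑ k ∈ range n, (jw n (k+1)/N)^2 = 1 := by
      simp only [div_pow]
      rw [← Finset.sum_div, ← hQ, hN2, div_self hQpos.ne']
    rw [h2, Real.sqrt_one]
  refine ⟨x, hnorm, ?_⟩
  rw [inner_jordan]
  have h3 : ∑ k ∈ range (n-1),
      (starRingEnd ℂ) (if h : k+1 < n then x ⟨k+1, h⟩ else 0)
        * (if h : k < n then x ⟨k, h⟩ else 0)
      = ((∑ k ∈ range (n-1), jw n (k+1) * jw n (k+2)) / Q : ℝ) := by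
    push_cast
    rw [Finset.sum_div]
    refine Finset.sum_congr rfl fun k hk => ?_
    have hk1 : k < n - 1 := Finset.mem_range.mp hk
    have hkn : k < n := by omega
    have hk1n : k + 1 < n := by omega
    rw [dif_pos hkn, dif_pos hk1n, hxk k hkn, hxk (k+1) hk1n]
    rw [Complex.conj_ofReal]
    push_cast
    rw [← hN2]
    field_simp
    push_cast
    ring
  rw [h3, jeq' n hn, ← hQ, mul_div_assoc, div_self hQpos.ne', mul_one]
  rw [Complex.norm_real, Real.norm_eq_abs, abs_of_nonneg (jcos_nonneg n hn)]

theorem numRadius_jordan_block' (n : ℕ) (hn : 2 ≤ n) :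
    sSup { r : ℝ | ∃ x : EuclideanSpace ℂ (Fin n), ‖x‖ = 1 ∧
      r = ‖(inner ℂ x (Matrix.toEuclideanLin (Matrix.of fun r s : Fin n =>
        if (r : ℕ) = (s : ℕ) + 1 then (1 : ℂ) else 0) x) : ℂ)‖ }
      = Real.cos (Real.pi / ((n : ℝ) + 1)) := by
  have hmem : Real.cos (jtheta n) ∈ { r : ℝ | ∃ x : EuclideanSpace ℂ (Fin n), ‖x‖ = 1 ∧
      r = ‖(inner ℂ x (Matrix.toEuclideanLin (Matrix.of fun r s : Fin n =>
        if (r : ℕ) = (s : ℕ) + 1 then (1 : ℂ) else 0) x) : ℂ)‖ } := by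
    obtain ⟨x, h1, h2⟩ := jordan_witness n hn
    exact ⟨x, h1, h2⟩
  have hub : ∀ r ∈ { r : ℝ | ∃ x : EuclideanSpace ℂ (Fin n), ‖x‖ = 1 ∧
      r = ‖(inner ℂ x (Matrix.toEuclideanLin (Matrix.of fun r s : Fin n =>
        if (r : ℕ) = (s : ℕ) + 1 then (1 : ℂ) else 0) x) : ℂ)‖ },
      r ≤ Real.cos (jtheta n) := by
    rintro r ⟨x, h1, rfl⟩
    exact jordan_upper n hn x h1
  have : jtheta n = Real.pi / ((n : ℝ) + 1) := rfl
  rw [← this]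
  exact le_antisymm (csSup_le ⟨_, hmem⟩ hub) (le_csSup ⟨_, hub⟩ hmem)

end JordanAux


/-- For every `n ≥ 2`, the numerical radius of the `n × n` nilpotent Jordan
block `S_n` (with `(r,s)` entry `1` if `r = s+1` and `0` otherwise) equals
`cos (π/(n+1))`. -/
theorem numRadius_jordan_block (n : ℕ) (hn : 2 ≤ n) :
    numRadius (Matrix.of fun r s : Fin n =>
        if (r : ℕ) = (s : ℕ) + 1 then (1 : ℂ) else 0)
      = Real.cos (Real.pi / ((n : ℝ) + 1)) := by
  unfold numRadius
  exact numRadius_jordan_block' n hn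
end
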